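/- Let E be a real Banach space and f : ℝ → E a curve. If for every continuous linear functional λ : E → ℝ the composition λ ∘ f : ℝ → ℝ is C^∞, then f itself is C^∞. (Banach-space instance of the lemma that scalarwise smooth curves into a convenient vector space are smooth.) -/

import Mathlib

open Filter Topology NormedSpace Set

/-- A weakly bounded family in a real normed space is norm bounded
(Banach–Steinhaus applied to the double dual embedding). -/
lemma norm_bound_of_weak_bound {E : Type*} [NormedAddCommGroup E] [NormedSpace ℝ E]
    {ι : Type*} (x : ι → E)
    (h : ∀ l : E →L[ℝ] ℝ, ∃ C, ∀ i, ‖l (x i)‖ ≤ C) : ∃ M, ∀ i, ‖x i‖ ≤ M := by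
  obtain ⟨C, hC⟩ := banach_steinhaus (g := fun i => inclusionInDoubleDual ℝ E (x i))
    (fun l => (h l).imp fun C hC i => hC i)
  refine ⟨C, fun i => ?_⟩
  have hnorm : ‖inclusionInDoubleDual ℝ E (x i)‖ = ‖x i‖ :=
    (inclusionInDoubleDualLi ℝ (E := E)).norm_map (x i)
  rw [← hnorm]; exact hC i

/-- Scalarwise smooth curves are differentiable. -/
lemma exists_hasDerivAt_of_scalarwise_smooth {E : Type*} [NormedAddCommGroup E]
    [NormedSpace ℝ E] [CompleteSpace E] (f : ℝ → E)
    (h : ∀ l : E →L[ℝ] ℝ, ContDiff ℝ (⊤ : ℕ∞) (fun t => l (f t))) (t₀ : ℝ) :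
    ∃ L, HasDerivAt f L t₀ := by
  have ht₀ : t₀ ∈ Icc (t₀ - 1) (t₀ + 1) := by constructor <;> linarith
  -- per-functional estimate on slopes
  have key : ∀ l : E →L[ℝ] ℝ, ∃ K : ℝ, 0 ≤ K ∧ ∀ t ∈ Icc (t₀ - 1) (t₀ + 1), t ≠ t₀ →
      |slope (fun s => l (f s)) t₀ t - deriv (fun s => l (f s)) t₀| ≤ K * |t - t₀| := by
    intro l
    set g : ℝ → ℝ := fun s => l (f s) with hgdef
    have hg : ContDiff ℝ (⊤ : ℕ∞) g := h l
    have hg1 : Differentiable ℝ g := hg.differentiable (by simp)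
    have hgd : ContDiff ℝ (⊤ : ℕ∞) (deriv g) := (contDiff_infty_iff_deriv.1 hg).2
    have hgd1 : Differentiable ℝ (deriv g) := hgd.differentiable (by simp)
    have hgdd : Continuous (deriv (deriv g)) := (contDiff_infty_iff_deriv.1 hgd).2.continuous
    obtain ⟨K, hK⟩ := (isCompact_Icc (a := t₀ - 1) (b := t₀ + 1)).exists_bound_of_continuousOn
      hgdd.continuousOn
    have hK0 : 0 ≤ K := le_trans (norm_nonneg _) (hK t₀ ht₀)
    -- deriv g is K-Lipschitz on the interval
    have hlip : ∀ x ∈ Icc (t₀ - 1) (t₀ + 1), |deriv g x - deriv g t₀| ≤ K * |x - t₀| := by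
      intro x hx
      have := (convex_Icc (t₀ - 1) (t₀ + 1)).norm_image_sub_le_of_norm_deriv_le
        (f := deriv g) (fun y _ => hgd1 y) hK ht₀ hx
      simpa [Real.norm_eq_abs] using this
    refine ⟨K, hK0, fun t ht htne => ?_⟩
    set d : ℝ := deriv g t₀ with hd
    set G : ℝ → ℝ := fun x => g x - d * x with hG
    have hGderiv : ∀ x, HasDerivAt G (deriv g x - d) x := fun x => by
      have h2 := ((hg1 x).hasDerivAt).sub ((hasDerivAt_id x).const_mul d)
      rw [mul_one] at h2
      exact h2
    have hsub : uIcc t₀ t ⊆ Icc (t₀ - 1) (t₀ + 1) := uIcc_subset_Icc ht₀ ht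
    have hbound : ∀ x ∈ uIcc t₀ t, ‖deriv G x‖ ≤ K * |t - t₀| := by
      intro x hx
      have hxmem := hsub hx
      have hxd : |x - t₀| ≤ |t - t₀| := by
        rcases mem_uIcc.1 hx with ⟨h1, h2⟩ | ⟨h1, h2⟩
        · rw [abs_of_nonneg (by linarith : (0:ℝ) ≤ x - t₀),
            abs_of_nonneg (by linarith : (0:ℝ) ≤ t - t₀)]
          linarith
        · rw [abs_of_nonpos (by linarith : x - t₀ ≤ (0:ℝ)),
            abs_of_nonpos (by linarith : t - t₀ ≤ (0:ℝ))]
          linarith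
      rw [(hGderiv x).deriv]
      calc ‖deriv g x - d‖ = |deriv g x - deriv g t₀| := rfl
        _ ≤ K * |x - t₀| := hlip x hxmem
        _ ≤ K * |t - t₀| := by nlinarith
    have hMVT := (convex_uIcc t₀ t).norm_image_sub_le_of_norm_deriv_le
      (f := G) (fun y _ => ((hGderiv y).differentiableAt)) hbound
      left_mem_uIcc right_mem_uIcc
    have habs : |G t - G t₀| ≤ K * |t - t₀| * |t - t₀| := by
      simpa [Real.norm_eq_abs] using hMVT
    have htne' : t - t₀ ≠ 0 := sub_ne_zero.2 htne
    have hslope : slope g t₀ t - d = (t - t₀)⁻¹ * (G t - G t₀) := by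
      rw [slope_def_field, hG]
      field_simp
      ring
    rw [hslope, abs_mul, abs_inv, inv_mul_le_iff₀ (abs_pos.2 htne')]
    calc |G t - G t₀| ≤ K * |t - t₀| * |t - t₀| := habs
      _ = |t - t₀| * (K * |t - t₀|) := by ring
  choose K hK0 hKf using key
  -- uniform bound on slope differences via Banach–Steinhaus
  set ι : Type _ := {p : ℝ × ℝ //
    (p.1 ∈ Icc (t₀ - 1) (t₀ + 1) ∧ p.1 ≠ t₀) ∧ p.2 ∈ Icc (t₀ - 1) (t₀ + 1) ∧ p.2 ≠ t₀} with hι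
  set x : ι → E := fun p =>
    (|p.1.1 - t₀| + |p.1.2 - t₀|)⁻¹ • (slope f t₀ p.1.1 - slope f t₀ p.1.2) with hx
  have hsum_pos : ∀ p : ι, 0 < |p.1.1 - t₀| + |p.1.2 - t₀| := fun p =>
    add_pos_of_pos_of_nonneg (abs_pos.2 (sub_ne_zero.2 p.2.1.2)) (abs_nonneg _)
  have hlf : ∀ (l : E →L[ℝ] ℝ) (s : ℝ),
      l (slope f t₀ s) = slope (fun u => l (f u)) t₀ s := by
    intro l s
    simp [slope_def_module, map_sub, map_smul]
  have hweak : ∀ l : E →L[ℝ] ℝ, ∃ C, ∀ p : ι, ‖l (x p)‖ ≤ C := by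
    intro l
    refine ⟨K l, fun p => ?_⟩
    obtain ⟨⟨h1, h1'⟩, h2, h2'⟩ := p.2
    have e1 := hKf l p.1.1 h1 h1'
    have e2 := hKf l p.1.2 h2 h2'
    have hmap : l (x p) = (|p.1.1 - t₀| + |p.1.2 - t₀|)⁻¹ *
        (slope (fun u => l (f u)) t₀ p.1.1 - slope (fun u => l (f u)) t₀ p.1.2) := by
      rw [hx]
      simp only [map_smul, map_sub, smul_eq_mul, hlf]
    set a := slope (fun u => l (f u)) t₀ p.1.1
    set b := slope (fun u => l (f u)) t₀ p.1.2
    set d := deriv (fun u => l (f u)) t₀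
    have htri : |a - b| ≤ K l * (|p.1.1 - t₀| + |p.1.2 - t₀|) := by
      calc |a - b| = |(a - d) - (b - d)| := by ring_nf
        _ ≤ |a - d| + |b - d| := abs_sub _ _
        _ ≤ K l * |p.1.1 - t₀| + K l * |p.1.2 - t₀| := add_le_add e1 e2
        _ = K l * (|p.1.1 - t₀| + |p.1.2 - t₀|) := by ring
    have hpos := hsum_pos p
    rw [hmap, Real.norm_eq_abs, abs_mul, abs_inv, abs_of_pos hpos,
      inv_mul_le_iff₀ hpos]
    calc |a - b| ≤ K l * (|p.1.1 - t₀| + |p.1.2 - t₀|) := htri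
      _ = (|p.1.1 - t₀| + |p.1.2 - t₀|) * K l := by ring
  obtain ⟨M, hM⟩ := norm_bound_of_weak_bound x hweak
  -- uniform norm estimate on slope differences
  have hest : ∀ s t : ℝ, s ∈ Icc (t₀ - 1) (t₀ + 1) → s ≠ t₀ →
      t ∈ Icc (t₀ - 1) (t₀ + 1) → t ≠ t₀ →
      ‖slope f t₀ s - slope f t₀ t‖ ≤ M * (|s - t₀| + |t - t₀|) := by
    intro s t hs hs' ht ht'
    set p : ι := ⟨(s, t), ⟨hs, hs'⟩, ht, ht'⟩
    have hpos := hsum_pos p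
    have := hM p
    rw [hx] at this
    simp only [norm_smul, norm_inv, Real.norm_eq_abs, abs_of_pos hpos] at this
    rw [inv_mul_le_iff₀ hpos] at this
    rw [mul_comm]
    exact this
  -- slopes form a Cauchy filter
  have hev : ∀ᶠ s in 𝓝[≠] t₀, s ∈ Icc (t₀ - 1) (t₀ + 1) ∧ s ≠ t₀ := by
    have h1 : Icc (t₀ - 1) (t₀ + 1) ∈ 𝓝[≠] t₀ :=
      mem_nhdsWithin_of_mem_nhds (Icc_mem_nhds (by linarith) (by linarith))
    have h2 : ∀ᶠ s in 𝓝[≠] t₀, s ≠ t₀ := self_mem_nhdsWithin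
    exact (eventually_mem_set.2 h1).and h2
  have hcauchy : Cauchy (map (slope f t₀) (𝓝[≠] t₀)) := by
    rw [cauchy_map_iff]
    refine ⟨inferInstance, ?_⟩
    rw [tendsto_uniformity_iff_dist_tendsto_zero]
    apply squeeze_zero' (Eventually.of_forall fun _ => dist_nonneg)
      (g := fun p : ℝ × ℝ => M * (|p.1 - t₀| + |p.2 - t₀|))
    · filter_upwards [hev.prod_mk hev] with p hp
      rw [dist_eq_norm]
      exact hest p.1 p.2 hp.1.1 hp.1.2 hp.2.1 hp.2.2
    · have hle : (𝓝[≠] t₀) ×ˢ (𝓝[≠] t₀) ≤ 𝓝 (t₀, t₀) := by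
        rw [nhds_prod_eq]
        exact prod_mono nhdsWithin_le_nhds nhdsWithin_le_nhds
      have hcont : Tendsto (fun p : ℝ × ℝ => M * (|p.1 - t₀| + |p.2 - t₀|))
          (𝓝 (t₀, t₀)) (𝓝 0) := by
        have : Continuous fun p : ℝ × ℝ => M * (|p.1 - t₀| + |p.2 - t₀|) := by fun_prop
        simpa using this.tendsto (t₀, t₀)
      exact hcont.mono_left hle
  obtain ⟨L, hL⟩ := CompleteSpace.complete hcauchy
  exact ⟨L, hasDerivAt_iff_tendsto_slope.2 hL⟩

private lemma scalarwise_smooth_contDiff_nat {E : Type*} [NormedAddCommGroup E]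
    [NormedSpace ℝ E] [CompleteSpace E] (n : ℕ) :
    ∀ f : ℝ → E, (∀ l : E →L[ℝ] ℝ, ContDiff ℝ (⊤ : ℕ∞) (fun t => l (f t))) →
      ContDiff ℝ (n : ℕ∞) f := by
  induction n with
  | zero =>
    intro f h
    have hdiff : Differentiable ℝ f := fun t =>
      (exists_hasDerivAt_of_scalarwise_smooth f h t).choose_spec.differentiableAt
    exact contDiff_zero.2 hdiff.continuous
  | succ n ih =>
    intro f h
    have hdiff : Differentiable ℝ f := fun t =>
      (exists_hasDerivAt_of_scalarwise_smooth f h t).choose_spec.differentiableAt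
    have hd : ∀ (l : E →L[ℝ] ℝ) t, deriv (fun s => l (f s)) t = l (deriv f t) := fun l t =>
      (l.hasFDerivAt.comp_hasDerivAt t (hdiff t).hasDerivAt).deriv
    have h' : ∀ l : E →L[ℝ] ℝ, ContDiff ℝ (⊤ : ℕ∞) (fun t => l (deriv f t)) := by
      intro l
      have := (contDiff_infty_iff_deriv.1 (h l)).2
      have heq : deriv (fun s => l (f s)) = fun t => l (deriv f t) := funext (hd l)
      rwa [heq] at this
    have : ((n + 1 : ℕ) : WithTop ℕ∞) = (n : WithTop ℕ∞) + 1 := by push_cast; ring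
    rw [show ((n + 1 : ℕ) : ℕ∞) = ((n : ℕ∞) + 1) by push_cast; ring]
    refine contDiff_succ_iff_deriv.2 ⟨hdiff, by simp, ih (deriv f) h'⟩

/-- A scalarwise smooth curve into a Banach space is smooth. -/
theorem smooth_of_scalarwise_smooth {E : Type*} [NormedAddCommGroup E] [NormedSpace ℝ E]
    [CompleteSpace E] (f : ℝ → E)
    (h : ∀ l : E →L[ℝ] ℝ, ContDiff ℝ (⊤ : ℕ∞) (fun t => l (f t))) :
    ContDiff ℝ (⊤ : ℕ∞) f := by
  exact contDiff_infty.2 fun n => scalarwise_smooth_contDiff_nat n f h
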